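/- Let M and N be nontrivial proper normal subgroups of a finite group G with M ≤ N, and let H ≤ G satisfy G = HM and H ∩ M = 1. Then (G,N,M) is a Frobenius triple if and only if N_G(X) ≤ H for every subgroup X ≤ H with X not contained in N. -/

import Mathlib

/-- `(G, N, M)` is a Frobenius triple: `M` and `N` are nontrivial proper normal
subgroups of `G` with `M ≤ N`, and `C_G(x) ≤ N` for every nonidentity `x ∈ M`. -/
def IsFrobeniusTriple {G : Type*} [Group G] (N M : Subgroup G) : Prop :=
  N.Normal ∧ M.Normal ∧ N ≠ ⊥ ∧ N ≠ ⊤ ∧ M ≠ ⊥ ∧ M ≠ ⊤ ∧ M ≤ N ∧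
    ∀ x ∈ M, x ≠ 1 → Subgroup.centralizer {x} ≤ N

/-- `(G, N, M)` is a Camina triple: `M` and `N` are nontrivial proper normal
subgroups of `G` with `M ≤ N`, and every `g ∈ G \ N` is conjugate to `g * m`
for every `m ∈ M`. -/
def IsCaminaTriple {G : Type*} [Group G] (N M : Subgroup G) : Prop :=
  N.Normal ∧ M.Normal ∧ N ≠ ⊥ ∧ N ≠ ⊤ ∧ M ≠ ⊥ ∧ M ≠ ⊤ ∧ M ≤ N ∧
    ∀ g : G, g ∉ N → ∀ m ∈ M, IsConj g (g * m)

theorem frobenius_triple_iff_normalizers {G : Type*} [Group G] [Fintype G]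
    (N M : Subgroup G) (hM : M.Normal) (hN : N.Normal)
    (hMbot : M ≠ ⊥) (hMtop : M ≠ ⊤) (hNbot : N ≠ ⊥) (hNtop : N ≠ ⊤) (hMN : M ≤ N)
    (H : Subgroup G) (hGHM : ∀ g : G, ∃ h ∈ H, ∃ m ∈ M, g = h * m) (hHM : H ⊓ M = ⊥) :
    IsFrobeniusTriple N M ↔
      ∀ X : Subgroup G, X ≤ H → ¬ X ≤ N → Subgroup.normalizer (X : Set G) ≤ H := by
  have memHM : ∀ c : G, c ∈ H → c ∈ M → c = 1 := by
    intro c hcH hcM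
    have : c ∈ H ⊓ M := ⟨hcH, hcM⟩
    rw [hHM, Subgroup.mem_bot] at this
    exact this
  constructor
  · rintro ⟨-, -, -, -, -, -, -, hcent⟩ X hXH hXN g hg
    obtain ⟨h, hh, m, hm, rfl⟩ := hGHM g
    obtain ⟨y, hyX, hyN⟩ := SetLike.not_le_iff_exists.mp hXN
    -- m commutes with y
    have hy2 : (h * m) * y * (h * m)⁻¹ ∈ X := (Subgroup.mem_normalizer_iff.mp hg y).mp hyX
    have hH1 : m * y * m⁻¹ ∈ H := by
      have : h⁻¹ * ((h * m) * y * (h * m)⁻¹) * h ∈ H :=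
        H.mul_mem (H.mul_mem (H.inv_mem hh) (hXH hy2)) hh
      convert this using 1
      group
    have hMmem : y⁻¹ * (m * y * m⁻¹) ∈ M := by
      have h1 : y⁻¹ * m * (y⁻¹)⁻¹ ∈ M := hM.conj_mem m hm y⁻¹
      rw [inv_inv] at h1
      have := M.mul_mem h1 (M.inv_mem hm)
      convert this using 1
      group
    have hHmem : y⁻¹ * (m * y * m⁻¹) ∈ H := H.mul_mem (H.inv_mem (hXH hyX)) hH1
    have hcomm : m * y * m⁻¹ = y := by
      have := memHM _ hHmem hMmem
      rw [inv_mul_eq_one] at this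
      exact this.symm
    by_cases hm1 : m = 1
    · rw [hm1, mul_one]; exact hh
    · exfalso
      apply hyN
      apply hcent m hm hm1
      rw [Subgroup.mem_centralizer_singleton_iff]
      rw [mul_inv_eq_iff_eq_mul] at hcomm
      exact hcomm.symm
  · intro hyp
    refine ⟨hN, hM, hNbot, hNtop, hMbot, hMtop, hMN, ?_⟩
    intro x hx hx1 g hg
    by_contra hgN
    -- key lemma: c ∈ M commuting with h ∈ H \ N forces c = 1
    have key : ∀ h c : G, h ∈ H → h ∉ N → c ∈ M → c * h = h * c → c = 1 := by
      intro h c hhH hhN hcM hcomm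
      have hcommute : Commute c h := hcomm
      have hfix : ∀ k : ℤ, c * h ^ k * c⁻¹ = h ^ k := by
        intro k
        rw [(hcommute.zpow_right k).eq, mul_inv_cancel_right]
      have hnorm : c ∈ Subgroup.normalizer ((Subgroup.zpowers h : Subgroup G) : Set G) := by
        rw [Subgroup.mem_normalizer_iff]
        intro n
        constructor
        · rintro ⟨k, rfl⟩
          exact ⟨k, by simpa using (hfix k).symm⟩
        · rintro ⟨k, hk⟩
          have hk' : h ^ k = c * n * c⁻¹ := hk
          have h3 : c⁻¹ * (c * h ^ k * c⁻¹) * c = h ^ k := by group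
          rw [hfix k] at h3
          have h4 : n = c⁻¹ * (c * n * c⁻¹) * c := by group
          rw [← hk'] at h4
          rw [h3] at h4
          exact ⟨k, h4.symm⟩
      have hXH : Subgroup.zpowers h ≤ H := Subgroup.zpowers_le.mpr hhH
      have hXN : ¬ Subgroup.zpowers h ≤ N := fun hle => hhN (hle (Subgroup.mem_zpowers h))
      exact memHM c (hyp _ hXH hXN hnorm) hcM
    obtain ⟨h, hhH, m, hm, rfl⟩ := hGHM g
    have hhN : h ∉ N := fun hn => hgN (N.mul_mem hn (hMN hm))
    -- the map a ↦ h⁻¹ a⁻¹ h a on M is injective, hence surjective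
    have hfm : ∀ a : M, h⁻¹ * (a : G)⁻¹ * h * a ∈ M := by
      intro a
      have h1 : h⁻¹ * (a : G)⁻¹ * (h⁻¹)⁻¹ ∈ M := hM.conj_mem _ (M.inv_mem a.2) h⁻¹
      rw [inv_inv] at h1
      exact M.mul_mem h1 a.2
    set f : M → M := fun a => ⟨h⁻¹ * (a : G)⁻¹ * h * a, hfm a⟩ with hf
    have hinj : Function.Injective f := by
      intro a b hab
      have hab' : h⁻¹ * (a : G)⁻¹ * h * a = h⁻¹ * (b : G)⁻¹ * h * b := congrArg Subtype.val hab
      have h1 : (a : G)⁻¹ * h * a = (b : G)⁻¹ * h * b := by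
        calc (a : G)⁻¹ * h * a = h * (h⁻¹ * (a : G)⁻¹ * h * a) := by group
          _ = h * (h⁻¹ * (b : G)⁻¹ * h * b) := by rw [hab']
          _ = (b : G)⁻¹ * h * b := by group
      have hcomm : ((b : G) * (a : G)⁻¹) * h = h * ((b : G) * (a : G)⁻¹) := by
        calc (b : G) * (a : G)⁻¹ * h = (b : G) * ((a : G)⁻¹ * h * a) * (a : G)⁻¹ := by group
          _ = (b : G) * ((b : G)⁻¹ * h * b) * (a : G)⁻¹ := by rw [h1]
          _ = h * ((b : G) * (a : G)⁻¹) := by group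
      have := key h _ hhH hhN (M.mul_mem b.2 (M.inv_mem a.2)) hcomm
      rw [mul_inv_eq_one] at this
      exact Subtype.ext this.symm
    have hsurj : Function.Surjective f := Finite.injective_iff_surjective.mp hinj
    obtain ⟨⟨t, htM⟩, hft⟩ := hsurj ⟨m, hm⟩
    have hmval : h⁻¹ * t⁻¹ * h * t = m := congrArg Subtype.val hft
    -- so t * (h * m) * t⁻¹ = h
    have hconj : t * (h * m) * t⁻¹ = h := by
      rw [← hmval]; group
    -- x' := t * x * t⁻¹ is a nontrivial element of M commuting with h
    have hx'M : t * x * t⁻¹ ∈ M := hM.conj_mem x hx t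
    have hgx : (h * m) * x = x * (h * m) :=
      Subgroup.mem_centralizer_singleton_iff.mp hg
    have hx'comm : (t * x * t⁻¹) * h = h * (t * x * t⁻¹) := by
      rw [← hconj]
      calc (t * x * t⁻¹) * (t * (h * m) * t⁻¹) = t * (x * (h * m)) * t⁻¹ := by group
        _ = t * ((h * m) * x) * t⁻¹ := by rw [hgx]
        _ = (t * (h * m) * t⁻¹) * (t * x * t⁻¹) := by group
    have := key h _ hhH hhN hx'M hx'comm
    apply hx1
    have : x = t⁻¹ * 1 * t := by rw [← this]; group
    simpa using this
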